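/- Let a₁, …, aₙ be points in convex position in clockwise order and let 1 ≤ i < j < k ≤ n. If the interior angle ∠a_i a_j a_k ≥ π/2, then dist(a_i, a_m) > dist(a_i, a_j) for every m with j < m ≤ k. -/

import Mathlib

/-- The cross product (signed area determinant) of two vectors in the Euclidean plane. -/
noncomputable def cross2 (u v : EuclideanSpace ℝ (Fin 2)) : ℝ := u 0 * v 1 - u 1 * v 0

/-- The vertices `P 0, P 1, …` form a convex polygon listed in clockwise order. -/
def ClockwiseConvexPos {n : ℕ} (P : Fin n → EuclideanSpace ℝ (Fin 2)) : Prop :=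
  ∀ i j k : Fin n, i < j → j < k → cross2 (P j - P i) (P k - P i) < 0

private lemma euclid_dist_eq' (x y : EuclideanSpace ℝ (Fin 2)) :
    dist x y = Real.sqrt ((x 0 - y 0)^2 + (x 1 - y 1)^2) := by
  rw [EuclideanSpace.dist_eq]
  simp [Fin.sum_univ_two, Real.dist_eq, sq_abs]

private lemma euclid_inner_eq' (x y : EuclideanSpace ℝ (Fin 2)) :
    (inner ℝ x y : ℝ) = x 0 * y 0 + x 1 * y 1 := by
  simp [PiLp.inner_apply, Fin.sum_univ_two, RCLike.inner_apply, mul_comm]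

private lemma main_real' (a b c d e f : ℝ)
    (h4 : a*e + b*f ≤ 0) (h1 : a*d - b*c > 0) (h2 : a*f - b*e > 0)
    (h3 : c*f - d*e < 0 ∨ (c = e ∧ d = f)) :
    a^2 + b^2 < (a-c)^2 + (b-d)^2 := by
  have hcd : 0 < c^2 + d^2 := by
    nlinarith [mul_pos h1 h1, sq_nonneg a, sq_nonneg b, sq_nonneg (a*d + b*c)]
  have key : a*c + b*d ≤ 0 := by
    rcases h3 with h3 | ⟨rfl, rfl⟩
    · have hab : 0 < a^2 + b^2 := by
        nlinarith [mul_pos h2 h2, sq_nonneg e, sq_nonneg f, sq_nonneg (a*f + b*e)]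
      have id : (a*f - b*e)*(a*c + b*d) = (c*f - d*e)*(a^2+b^2) + (a*d - b*c)*(a*e + b*f) := by
        ring
      nlinarith [mul_pos (neg_pos.mpr h3) hab, mul_nonneg h1.le (neg_nonneg.mpr h4), h2]
    · exact h4
  nlinarith [key, hcd]

/-- If the angle `∠ a_i a_j a_k` (at vertex `a_j`) of a convex polygon is at least `π/2`,
then `dist a_i a_m > dist a_i a_j` for every `m` with `j < m ≤ k`. -/
theorem stmt18 {n : ℕ} (P : Fin n → EuclideanSpace ℝ (Fin 2)) (hP : ClockwiseConvexPos P)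
    (i j k : Fin n) (hij : i < j) (hjk : j < k)
    (hangle : Real.pi / 2 ≤ EuclideanGeometry.angle (P i) (P j) (P k)) :
    ∀ m : Fin n, j < m → m ≤ k → dist (P i) (P j) < dist (P i) (P m) := by
  -- From the angle hypothesis, the inner product of the two edge vectors is nonpositive.
  have hcos : Real.cos (EuclideanGeometry.angle (P i) (P j) (P k)) ≤ 0 := by
    apply Real.cos_nonpos_of_pi_div_two_le_of_le hangle
    have := EuclideanGeometry.angle_le_pi (P i) (P j) (P k)
    linarith [Real.pi_pos]
  have hinner : (inner ℝ (P i - P j) (P k - P j) : ℝ) ≤ 0 := by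
    have heq : EuclideanGeometry.angle (P i) (P j) (P k)
        = InnerProductGeometry.angle (P i - P j) (P k - P j) := rfl
    have h := InnerProductGeometry.cos_angle_mul_norm_mul_norm (P i - P j) (P k - P j)
    rw [← h, ← heq]
    exact mul_nonpos_of_nonpos_of_nonneg hcos
      (mul_nonneg (norm_nonneg _) (norm_nonneg _))
  have h4 : (P i 0 - P j 0) * (P k 0 - P j 0) + (P i 1 - P j 1) * (P k 1 - P j 1) ≤ 0 := by
    rw [euclid_inner_eq'] at hinner
    simp only [PiLp.sub_apply] at hinner
    linarith
  have h2 : (P i 0 - P j 0) * (P k 1 - P j 1) - (P i 1 - P j 1) * (P k 0 - P j 0) > 0 := by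
    have := hP i j k hij hjk
    simp only [cross2, PiLp.sub_apply] at this
    nlinarith [this]
  intro m hjm hmk
  have h1 : (P i 0 - P j 0) * (P m 1 - P j 1) - (P i 1 - P j 1) * (P m 0 - P j 0) > 0 := by
    have := hP i j m hij hjm
    simp only [cross2, PiLp.sub_apply] at this
    nlinarith [this]
  have h3 : (P m 0 - P j 0) * (P k 1 - P j 1) - (P m 1 - P j 1) * (P k 0 - P j 0) < 0 ∨
      (P m 0 - P j 0 = P k 0 - P j 0 ∧ P m 1 - P j 1 = P k 1 - P j 1) := by
    rcases lt_or_eq_of_le hmk with hlt | heqk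
    · left
      have := hP j m k hjm hlt
      simp only [cross2, PiLp.sub_apply] at this
      nlinarith [this]
    · right
      rw [heqk]
      exact ⟨rfl, rfl⟩
  have main := main_real' (P i 0 - P j 0) (P i 1 - P j 1) (P m 0 - P j 0) (P m 1 - P j 1)
    (P k 0 - P j 0) (P k 1 - P j 1) h4 h1 h2 h3
  rw [euclid_dist_eq', euclid_dist_eq']
  apply Real.sqrt_lt_sqrt (by positivity)
  nlinarith [main]
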